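/- Let G and H be graphs with 2s+1 < og(H). Then there is a homomorphism from S_{2s+1}(G) to H if and only if there is a homomorphism from G to H^{2s+1}. -/

import Mathlib

structure SimpleGraphS where
  V : Type
  Adj : V → V → Prop
  symm : ∀ u v, Adj u v → Adj v u

namespace SimpleGraphS

/-- There is a walk of length exactly `n` from `u` to `v`. -/
def walkLen (G : SimpleGraphS) : ℕ → G.V → G.V → Prop
  | 0, u, v => u = v
  | n+1, u, v => ∃ w, G.Adj u w ∧ G.walkLen n w v

theorem walkLen_concat (G : SimpleGraphS) : ∀ (n : ℕ) (u v w : G.V),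
    G.walkLen n u v → G.Adj v w → G.walkLen (n+1) u w := by
  intro n
  induction n with
  | zero =>
      intro u v w h hadj
      cases h
      exact ⟨w, hadj, rfl⟩
  | succ n ih =>
      rintro u v w ⟨x, hux, hxv⟩ hadj
      exact ⟨x, hux, ih x v w hxv hadj⟩

theorem walkLen_symm (G : SimpleGraphS) : ∀ (n : ℕ) (u v : G.V),
    G.walkLen n u v → G.walkLen n v u := by
  intro n
  induction n with
  | zero => intro u v h; exact h.symm
  | succ n ih =>
      rintro u v ⟨w, huw, hwv⟩
      exact G.walkLen_concat n v w u (ih w v hwv) (G.symm u w huw)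

/-- The `k`-th power of a graph: same vertices, adjacency = existence of a
walk of length exactly `k` (loops allowed). -/
def pow (G : SimpleGraphS) (k : ℕ) : SimpleGraphS where
  V := G.V
  Adj u v := G.walkLen k u v
  symm := G.walkLen_symm k

/-- Existence of a graph homomorphism. -/
def homTo (G H : SimpleGraphS) : Prop :=
  ∃ f : G.V → H.V, ∀ u v, G.Adj u v → H.Adj (f u) (f v)

/-- The `(2s+1)`-subdivision `S_{2s+1}(G)`: every edge is replaced by a path
of length `2s+1`.  Following the paper's notation, the ordered pair `(u,v)`
(with `u ~ v`) carries the `s` inner vertices `(uv)_1, …, (uv)_s`. -/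
def subdiv (G : SimpleGraphS) (s : ℕ) : SimpleGraphS where
  V := G.V ⊕ ({p : G.V × G.V // G.Adj p.1 p.2} × Fin s)
  Adj x y :=
    match x, y with
    | Sum.inl u, Sum.inl v => s = 0 ∧ G.Adj u v
    | Sum.inl u, Sum.inr (e, k) => u = e.1.2 ∧ (k : ℕ) = s - 1
    | Sum.inr (e, k), Sum.inl u => u = e.1.2 ∧ (k : ℕ) = s - 1
    | Sum.inr (e, k), Sum.inr (e', l) =>
        e'.1.1 = e.1.2 ∧ e'.1.2 = e.1.1 ∧
        ((k : ℕ) + (l : ℕ) + 2 = s ∨ (k : ℕ) + (l : ℕ) + 2 = s + 1)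
  symm := by
    rintro (u | ⟨e, k⟩) (v | ⟨e', l⟩) h
    · exact ⟨h.1, G.symm _ _ h.2⟩
    · exact h
    · exact h
    · obtain ⟨h1, h2, h3⟩ := h
      exact ⟨h2.symm, h1.symm, by omega⟩

/-- `q < og(G)`: the rational `q` is smaller than the odd girth of `G`
(the length of a shortest odd closed walk; vacuously true if `G` is bipartite). -/
def ltOddGirth (G : SimpleGraphS) (q : ℚ) : Prop :=
  ∀ n : ℕ, Odd n → (∃ v, G.walkLen n v v) → q < (n : ℚ)

/-- A graph is non-bipartite iff it contains an odd closed walk. -/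
def Nonbipartite (G : SimpleGraphS) : Prop :=
  ∃ (n : ℕ) (v : G.V), Odd n ∧ G.walkLen n v v

/-- The odd girth, as an extended natural number (`⊤` for bipartite graphs). -/
noncomputable def oddGirth (G : SimpleGraphS) : ℕ∞ :=
  sInf {N : ℕ∞ | ∃ n : ℕ, N = (n : ℕ∞) ∧ Odd n ∧ ∃ v, G.walkLen n v v}

/-- The complete graph on `m` vertices. -/
def completeGraph (m : ℕ) : SimpleGraphS :=
  ⟨Fin m, fun u v => u ≠ v, fun _ _ h => h.symm⟩

/-- The chromatic number: least `m` such that `G` maps homomorphically to `K_m`. -/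
noncomputable def chromatic (G : SimpleGraphS) : ℕ :=
  sInf {m : ℕ | G.homTo (completeGraph m)}

/-- The `i`-th power thickness
`θ_i(G) = sup { (2r+1)/(2s+1) | χ(G^{(2r+1)/(2s+1)}) ≤ χ(G)+i, (2r+1)/(2s+1) < og(G) }`. -/
noncomputable def powerThickness (G : SimpleGraphS) (i : ℤ) : ℝ :=
  sSup {x : ℝ | ∃ r s : ℕ, x = (2*(r:ℝ)+1)/(2*(s:ℝ)+1) ∧
    ((((G.subdiv s).pow (2*r+1)).chromatic : ℤ) ≤ (G.chromatic : ℤ) + i) ∧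
    G.ltOddGirth ((2*(r:ℚ)+1)/(2*(s:ℚ)+1))}

/-- The graph `H^{-1/(2r+1)}`. -/
def negPow (H : SimpleGraphS) (r : ℕ) : SimpleGraphS where
  V := {A : Fin (r+1) → Set H.V //
        (∃ v, A 0 = {v}) ∧
        ∀ i : Fin (r+1), (A i).Nonempty ∧ A i ⊆ {u | ∃ v ∈ A 0, H.walkLen i v u}}
  Adj A B :=
    (∀ i j : Fin (r+1), (j : ℕ) = (i : ℕ) + 1 → A.1 i ⊆ B.1 j ∧ B.1 i ⊆ A.1 j) ∧
    ∀ j : Fin (r+1), ∀ a ∈ A.1 j, ∀ b ∈ B.1 j, H.Adj a b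
  symm := by
    rintro A B ⟨h1, h2⟩
    exact ⟨fun i j hij => ⟨(h1 i j hij).2, (h1 i j hij).1⟩,
           fun j b hb a ha => H.symm _ _ (h2 j a ha b hb)⟩

/-- The circular complete graph `K_{n/d}`. -/
def circGraph (n d : ℕ) : SimpleGraphS where
  V := Fin n
  Adj u v := (d : ℤ) ≤ |(u : ℤ) - (v : ℤ)| ∧ |(u : ℤ) - (v : ℤ)| ≤ (n : ℤ) - d
  symm := by
    intro u v h
    rwa [abs_sub_comm]

/-- The circular chromatic number, as a real number. -/
noncomputable def circChrom (G : SimpleGraphS) : ℝ :=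
  sInf {x : ℝ | ∃ n d : ℕ, 0 < d ∧ 2 * d ≤ n ∧ Nat.gcd n d = 1 ∧
    x = (n : ℝ) / (d : ℝ) ∧ G.homTo (circGraph n d)}

/-- The cycle on `m` vertices. -/
def cycleGraph (m : ℕ) : SimpleGraphS :=
  ⟨ZMod m, fun i j => i = j + 1 ∨ j = i + 1, fun _ _ h => h.symm⟩

/-- SimpleGraphS isomorphism. -/
def Isom (G H : SimpleGraphS) : Prop :=
  ∃ f : G.V ≃ H.V, ∀ u v, G.Adj u v ↔ H.Adj (f u) (f v)

/-- The helical graph `H(m,n,k)`. -/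
def helical (m n k : ℕ) : SimpleGraphS where
  V := {A : Fin k → Set (Fin m) //
        (∀ h : 0 < k, (A ⟨0, h⟩).ncard = n) ∧
        (∀ i, n ≤ (A i).ncard) ∧
        (∀ i : Fin k, ∀ h : (i : ℕ) + 1 < k, A i ∩ A ⟨(i : ℕ) + 1, h⟩ = ∅) ∧
        (∀ i : Fin k, ∀ h : (i : ℕ) + 2 < k, A i ⊆ A ⟨(i : ℕ) + 2, h⟩)}
  Adj A B :=
    (∀ i, A.1 i ∩ B.1 i = ∅) ∧
    (∀ i : Fin k, ∀ h : (i : ℕ) + 1 < k,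
      A.1 i ⊆ B.1 ⟨(i : ℕ) + 1, h⟩ ∧ B.1 i ⊆ A.1 ⟨(i : ℕ) + 1, h⟩)
  symm := by
    rintro A B ⟨h1, h2⟩
    refine ⟨fun i => ?_, fun i h => ⟨(h2 i h).2, (h2 i h).1⟩⟩
    rw [Set.inter_comm]
    exact h1 i

/-- A graph with chromatic number `k` is colorful if every proper `k`-coloring
admits a (nonempty) induced subgraph all of whose vertices see all `k` colors in
their closed neighborhood. -/
def Colorful (G : SimpleGraphS) : Prop :=
  ∀ c : G.V → Fin G.chromatic, (∀ u v, G.Adj u v → c u ≠ c v) →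
    ∃ S : Set G.V, S.Nonempty ∧
      ∀ v ∈ S, ∀ col : Fin G.chromatic,
        ∃ u ∈ S, (u = v ∨ G.Adj v u) ∧ c u = col

end SimpleGraphS


namespace SimpleGraphS

theorem walkLen_exists_fun (H : SimpleGraphS) : ∀ (n : ℕ) (a b : H.V), H.walkLen n a b →
    ∃ w : ℕ → H.V, w 0 = a ∧ w n = b ∧ ∀ i < n, H.Adj (w i) (w (i+1)) := by
  intro n
  induction n with
  | zero =>
      intro a b hab
      exact ⟨fun _ => a, rfl, hab ▸ rfl, by omega⟩
  | succ n ih =>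
      rintro a b ⟨c, hac, hcb⟩
      obtain ⟨w, hw0, hwn, hstep⟩ := ih c b hcb
      refine ⟨fun i => if i = 0 then a else w (i-1), by simp, by simp [hwn], ?_⟩
      intro i hi
      rcases Nat.eq_zero_or_pos i with rfl | hpos
      · simpa [hw0] using hac
      · have h1 : ¬ (i = 0) := by omega
        have h2 : ¬ (i + 1 = 0) := by omega
        simp only [h1, h2, if_false]
        have : i - 1 + 1 = i + 1 - 1 := by omega
        rw [← this]
        exact hstep (i-1) (by omega)

end SimpleGraphS

open SimpleGraphS
/-- If `2s+1 < og(H)` then `S_{2s+1}(G) → H` iff `G → H^{2s+1}`. -/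
theorem subdiv_hom_iff_hom_pow (G H : SimpleGraphS) (s : ℕ)
    (h : H.ltOddGirth (2 * (s : ℚ) + 1)) :
    (G.subdiv s).homTo H ↔ G.homTo (H.pow (2 * s + 1)) := by
  classical
  constructor
  · -- forward direction
    rintro ⟨g, hg⟩
    refine ⟨fun u => g (Sum.inl u), ?_⟩
    intro u v huv
    show H.walkLen (2*s+1) (g (Sum.inl u)) (g (Sum.inl v))
    rcases Nat.eq_zero_or_pos s with rfl | hs
    · exact ⟨g (Sum.inl v), hg _ _ ⟨rfl, huv⟩, rfl⟩
    · have key : ∀ j, j < s →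
          H.walkLen (2*j+1) (g (Sum.inr (⟨(u,v),huv⟩, ⟨s-1-j, by omega⟩)))
            (g (Sum.inl v)) := by
        intro j
        induction j with
        | zero =>
            intro hj
            exact ⟨g (Sum.inl v), hg _ _ ⟨rfl, show s-1-0 = s-1 by omega⟩, rfl⟩
        | succ j ih =>
            intro hj
            have e1 : 2*(j+1)+1 = (2*j+1)+1+1 := by ring
            rw [e1]
            exact ⟨g (Sum.inr (⟨(v,u), G.symm u v huv⟩, ⟨j, by omega⟩)),
              hg _ _ ⟨rfl, rfl, Or.inl (show (s-1-(j+1)) + j + 2 = s by omega)⟩,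
              g (Sum.inr (⟨(u,v), huv⟩, ⟨s-1-j, by omega⟩)),
              hg _ _ ⟨rfl, rfl, Or.inr (show j + (s-1-j) + 2 = s+1 by omega)⟩,
              ih (by omega)⟩
      have kk := key (s-1) (by omega)
      rw [(by omega : 2*(s-1)+1 = 2*s-1)] at kk
      rw [(by omega : 2*s+1 = (2*s-1)+1+1)]
      exact ⟨g (Sum.inr (⟨(v,u), G.symm u v huv⟩, ⟨s-1, by omega⟩)),
        hg _ _ ⟨rfl, rfl⟩,
        g (Sum.inr (⟨(u,v), huv⟩, ⟨s-1-(s-1), by omega⟩)),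
        hg _ _ ⟨rfl, rfl, Or.inr (show (s-1) + (s-1-(s-1)) + 2 = s+1 by omega)⟩,
        kk⟩
  · -- backward direction
    rintro ⟨f, hf⟩
    have hf' : ∀ u v, G.Adj u v → H.walkLen (2*s+1) (f u) (f v) := hf
    have noloop : ∀ u, ¬ G.Adj u u := by
      intro u hu
      have := h (2*s+1) ⟨s, by ring⟩ ⟨f u, hf' u u hu⟩
      push_cast at this
      linarith
    have hwalk : ∀ u v, G.Adj u v → ∃ w : ℕ → H.V, w 0 = f u ∧ w (2*s+1) = f v ∧
        ∀ i < 2*s+1, H.Adj (w i) (w (i+1)) :=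
      fun u v huv => H.walkLen_exists_fun _ _ _ (hf' u v huv)
    choose c hc0 hcn hcstep using hwalk
    have hWex : ∃ W : G.V → G.V → ℕ → H.V,
        (∀ u v (huv : G.Adj u v), W u v 0 = f u ∧ W u v (2*s+1) = f v ∧
          ∀ i < 2*s+1, H.Adj (W u v i) (W u v (i+1))) ∧
        (∀ u v, u ≠ v → G.Adj u v → ∀ i ≤ 2*s+1, W v u i = W u v (2*s+1-i)) := by
      refine ⟨fun u v => if WellOrderingRel u v then
          (fun i => if hA : G.Adj u v then c u v hA i else f u)
        else
          (fun i => if hA : G.Adj v u then c v u hA (2*s+1-i) else f u), ?_, ?_⟩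
      · intro u v huv
        by_cases hr : WellOrderingRel u v
        · simp only [if_pos hr, huv, ↓reduceDIte]
          exact ⟨hc0 u v huv, hcn u v huv, hcstep u v huv⟩
        · have hvu := G.symm u v huv
          simp only [if_neg hr, hvu, ↓reduceDIte]
          refine ⟨?_, ?_, ?_⟩
          · simpa using hcn v u hvu
          · simpa using hc0 v u hvu
          · intro i hi
            have hstep := hcstep v u hvu (2*s - i) (by omega)
            have e1 : 2*s+1 - i = (2*s - i) + 1 := by omega
            have e2 : 2*s+1 - (i+1) = 2*s - i := by omega
            rw [e1, e2]
            exact H.symm _ _ hstep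
      · intro u v hne huv i hi
        rcases trichotomous_of WellOrderingRel u v with hr | he | hr
        · have hr' : ¬ WellOrderingRel v u := asymm hr
          simp only [if_pos hr, if_neg hr', huv, ↓reduceDIte]
        · exact absurd he hne
        · have hr' : ¬ WellOrderingRel u v := asymm hr
          simp only [if_pos hr, if_neg hr', G.symm u v huv, ↓reduceDIte]
          congr 1
          omega
    obtain ⟨W, hWp, hWsym⟩ := hWex
    refine ⟨fun x => match x with
      | Sum.inl u => f u
      | Sum.inr (e, k) => W e.1.1 e.1.2 (2*(k:ℕ)+2), ?_⟩
    rintro (u | ⟨e, k⟩) (v | ⟨e', l⟩) hadj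
    · -- inl / inl
      show H.Adj (f u) (f v)
      obtain ⟨hs0, huv⟩ := hadj
      have hw := hf' u v huv
      rw [hs0] at hw
      obtain ⟨w, hw, he⟩ := hw
      have he' : w = f v := he
      exact he' ▸ hw
    · -- inl / inr
      obtain ⟨⟨a,b⟩,hab⟩ := e'
      obtain ⟨h1, h2⟩ := hadj
      have h1' : u = b := h1
      subst h1'
      show H.Adj (f u) (W a u (2*(l:ℕ)+2))
      have hl := l.isLt
      have h2' : (l:ℕ) = s - 1 := h2
      have e1 : 2*(l:ℕ)+2 = 2*s := by omega
      rw [e1]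
      have hstep := (hWp a u hab).2.2 (2*s) (by omega)
      rw [(hWp a u hab).2.1] at hstep
      exact H.symm _ _ hstep
    · -- inr / inl
      obtain ⟨⟨a,b⟩,hab⟩ := e
      obtain ⟨h1, h2⟩ := hadj
      have h1' : v = b := h1
      subst h1'
      show H.Adj (W a v (2*(k:ℕ)+2)) (f v)
      have hk := k.isLt
      have h2' : (k:ℕ) = s - 1 := h2
      have e1 : 2*(k:ℕ)+2 = 2*s := by omega
      rw [e1]
      rw [← (hWp a v hab).2.1]
      exact (hWp a v hab).2.2 (2*s) (by omega)
    · -- inr / inr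
      obtain ⟨⟨a,b⟩,hab⟩ := e
      obtain ⟨⟨a',b'⟩,hab'⟩ := e'
      obtain ⟨h1, h2, h3⟩ := hadj
      have h1' : a' = b := h1
      have h2' : b' = a := h2
      subst h1'
      subst h2'
      have h3' : (k:ℕ) + (l:ℕ) + 2 = s ∨ (k:ℕ) + (l:ℕ) + 2 = s + 1 := h3
      show H.Adj (W b' a' (2*(k:ℕ)+2)) (W a' b' (2*(l:ℕ)+2))
      have hk := k.isLt
      have hl := l.isLt
      have hne : b' ≠ a' := by
        rintro rfl
        exact noloop b' hab
      rw [hWsym b' a' hne hab (2*(l:ℕ)+2) (by omega)]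
      rcases h3' with h3' | h3'
      · rw [(by omega : 2*s+1 - (2*(l:ℕ)+2) = (2*(k:ℕ)+2)+1)]
        exact (hWp b' a' hab).2.2 (2*(k:ℕ)+2) (by omega)
      · rw [(by omega : 2*s+1 - (2*(l:ℕ)+2) = 2*(k:ℕ)+1)]
        have hstep := (hWp b' a' hab).2.2 (2*(k:ℕ)+1) (by omega)
        rw [(by ring : 2*(k:ℕ)+1+1 = 2*(k:ℕ)+2)] at hstep
        exact H.symm _ _ hstep
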